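/- For every function f ∈ L¹(ℝ²), the set {s ∈ [0,π/2) : D̄_s f(x) = ∞ for almost every x ∈ ℝ²} is a G_δ set in [0,π/2), i.e. it equals (⋂_{k=1}^∞ G_k) ∩ [0,π/2) for some sequence of open sets G_k ⊆ ℝ. -/

import Mathlib

open MeasureTheory Filter Set Real
open scoped ENNReal

noncomputable section

/-- Rotation of the plane about the origin by angle `s`. -/
def rot (s : ℝ) (p : ℝ × ℝ) : ℝ × ℝ :=
  (p.1 * Real.cos s - p.2 * Real.sin s, p.1 * Real.sin s + p.2 * Real.cos s)

/-- The open rectangle with slope `s`, corner `c` and side lengths `a`, `b`. -/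
def rect (s : ℝ) (c : ℝ × ℝ) (a b : ℝ) : Set (ℝ × ℝ) :=
  (fun p => c + rot s p) '' (Set.Ioo 0 a ×ˢ Set.Ioo 0 b)

/-- `R` is an open rectangle with slope `s` whose side lengths satisfy `P`. -/
def IsRectWith (s : ℝ) (P : ℝ → Prop) (R : Set (ℝ × ℝ)) : Prop :=
  ∃ c a b, 0 < a ∧ 0 < b ∧ P a ∧ P b ∧ R = rect s c a b

/-- `R` is an open rectangle with slope `s`. -/
def IsRect (s : ℝ) (R : Set (ℝ × ℝ)) : Prop :=
  IsRectWith s (fun _ => True) R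

/-- Average of `f` over the set `R`. -/
def avg (f : ℝ × ℝ → ℝ) (R : Set (ℝ × ℝ)) : ℝ :=
  (∫ p in R, f p) / (volume R).toReal

/-- The filter of slope-`s` rectangles containing `x` with diameters shrinking to `0`. -/
def rectFilter (s : ℝ) (x : ℝ × ℝ) : Filter (Set (ℝ × ℝ)) :=
  ⨅ d ∈ Set.Ioi (0 : ℝ), Filter.principal {R | IsRect s R ∧ x ∈ R ∧ Metric.diam R < d}

/-- The upper derivative `D̄_s f (x)`. -/
def upperDeriv (s : ℝ) (f : ℝ × ℝ → ℝ) (x : ℝ × ℝ) : EReal :=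
  Filter.limsup (fun R => (avg f R : EReal)) (rectFilter s x)

/-- The basis `R_s` differentiates the integral of `f`. -/
def Differentiates (s : ℝ) (f : ℝ × ℝ → ℝ) : Prop :=
  ∀ᵐ x : ℝ × ℝ, Filter.Tendsto (fun R => avg f R) (rectFilter s x) (nhds (f x))

/-- `S ⊆ [0, π/2)` is a `G_δ` set in `[0, π/2)`. -/
def IsGdeltaIn (S : Set ℝ) : Prop :=
  ∃ G : ℕ → Set ℝ, (∀ k, IsOpen (G k)) ∧ S = (⋂ k, G k) ∩ Set.Ico 0 (π / 2)

/-- `S` is a `G_δσ` set in `[0, π/2)`. -/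
def IsGdeltaSigmaIn (S : Set ℝ) : Prop :=
  ∃ F : ℕ → Set ℝ, (∀ n, IsGdeltaIn (F n)) ∧ S = ⋃ n, F n

/-- `S` is an `R`-set. -/
def IsRSet (S : Set ℝ) : Prop :=
  S ⊆ Set.Ico 0 (π / 2) ∧
    ∃ f : ℝ × ℝ → ℝ, Integrable f ∧
      (∀ s ∈ Set.Ico 0 (π / 2) \ S, Differentiates s f) ∧
      (∀ s ∈ S, ∀ᵐ x : ℝ × ℝ, upperDeriv s f x = ⊤)

/-- `S` is a `WR`-set. -/
def IsWRSet (S : Set ℝ) : Prop :=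
  S ⊆ Set.Ico 0 (π / 2) ∧
    ∃ f : ℝ × ℝ → ℝ, Integrable f ∧
      (∀ s ∈ Set.Ico 0 (π / 2) \ S, Differentiates s f) ∧
      (∀ s ∈ S, 0 < volume {x : ℝ × ℝ | upperDeriv s f x = ⊤})

/-- The grid square `Q_k^n` of side `1/n`. -/
def gridSq (n : ℕ) (k : ℤ × ℤ) : Set (ℝ × ℝ) :=
  (fun x : ℝ × ℝ => ((n : ℝ))⁻¹ • (((k.1 : ℝ), (k.2 : ℝ)) + x)) ''
    (Set.Ico (-(1 : ℝ)/2) (1/2) ×ˢ Set.Ico (-(1 : ℝ)/2) (1/2))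

/-- `mes_* A = inf_k |A ∩ Q_k|`. -/
def mesLow (A : Set (ℝ × ℝ)) : ℝ :=
  ⨅ k : ℤ × ℤ, (volume (A ∩ gridSq 1 k)).toReal

/-- `mes^* A = sup_k |A ∩ Q_k|`. -/
def mesUp (A : Set (ℝ × ℝ)) : ℝ :=
  ⨆ k : ℤ × ℤ, (volume (A ∩ gridSq 1 k)).toReal

/-- `dil_n A = {x : n x ∈ A}`. -/
def dil (n : ℕ) (A : Set (ℝ × ℝ)) : Set (ℝ × ℝ) :=
  {x : ℝ × ℝ | (n : ℝ) • x ∈ A}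

/-- `A` is a `δ`-set with respect to the slope `s`: a union of mutually disjoint
rectangles of slope `s` with both side lengths `≥ δ`. -/
def IsDeltaSet (s δ : ℝ) (A : Set (ℝ × ℝ)) : Prop :=
  ∃ (ι : Type) (R : ι → Set (ℝ × ℝ)),
    (∀ i, IsRectWith s (fun a => δ ≤ a) (R i)) ∧
      Pairwise (Function.onFun Disjoint R) ∧ A = ⋃ i, R i

/-- The maximal function over slope-`s` rectangles whose side lengths satisfy `P`. -/
def maxFn (s : ℝ) (P : ℝ → Prop) (f : ℝ × ℝ → ℝ) (x : ℝ × ℝ) : ℝ≥0∞ :=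
  ⨆ (R : Set (ℝ × ℝ)) (_ : IsRectWith s P R ∧ x ∈ R),
    ENNReal.ofReal (|∫ p in R, f p| / (volume R).toReal)

/-- The points `θ_k`, `k = ±1, ±2, …`. -/
def theta (ε γ : ℝ) (k : ℤ) : ℝ × ℝ :=
  (ε / 2 ^ k.natAbs, (k.sign : ℝ) * Real.tan γ * ε / 2 ^ k.natAbs)

/-- The strip `Γ_s(ε)`. -/
def strip (s ε : ℝ) : Set (ℝ × ℝ) :=
  rot s '' {x : ℝ × ℝ | |x.2| < ε}

/-- The Euclidean ball `B(ε)` in the plane. -/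
def euclBall (ε : ℝ) : Set (ℝ × ℝ) :=
  {x : ℝ × ℝ | Real.sqrt (x.1 ^ 2 + x.2 ^ 2) ≤ ε}



-- ===== auxiliary development =====

lemma rot_rot_neg (s : ℝ) (p : ℝ × ℝ) : rot s (rot (-s) p) = p := by
  have h := sin_sq_add_cos_sq s
  simp only [rot, Real.cos_neg, Real.sin_neg]
  rw [Prod.ext_iff]
  constructor <;> simp only [] <;> [linear_combination p.1 * h; linear_combination p.2 * h]

lemma rot_neg_rot (s : ℝ) (p : ℝ × ℝ) : rot (-s) (rot s p) = p := by
  have h := sin_sq_add_cos_sq s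
  simp only [rot, Real.cos_neg, Real.sin_neg]
  rw [Prod.ext_iff]
  constructor <;> simp only [] <;> [linear_combination p.1 * h; linear_combination p.2 * h]

lemma continuous_rot : Continuous fun q : ℝ × (ℝ × ℝ) => rot q.1 q.2 := by
  unfold rot; fun_prop

def rotL (s : ℝ) : (ℝ × ℝ) →ₗ[ℝ] (ℝ × ℝ) where
  toFun := rot s
  map_add' p q := by simp only [rot, Prod.fst_add, Prod.snd_add, Prod.mk_add_mk, Prod.mk.injEq]; constructor <;> ring
  map_smul' r p := by simp only [rot, Prod.smul_fst, Prod.smul_snd, Prod.smul_mk, smul_eq_mul, RingHom.id_apply, Prod.mk.injEq]; constructor <;> ring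

@[simp] lemma rotL_apply (s : ℝ) (p : ℝ × ℝ) : rotL s p = rot s p := rfl

lemma rotL_det (s : ℝ) : LinearMap.det (rotL s) = 1 := by
  rw [← LinearMap.det_toMatrix (Module.Basis.finTwoProd ℝ)]
  have : (LinearMap.toMatrix (Module.Basis.finTwoProd ℝ) (Module.Basis.finTwoProd ℝ)) (rotL s)
      = !![Real.cos s, -Real.sin s; Real.sin s, Real.cos s] := by
    ext i j
    fin_cases i <;> fin_cases j <;>
      simp [LinearMap.toMatrix_apply, Module.Basis.finTwoProd, rotL, rot]
  rw [this, Matrix.det_fin_two]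
  have h := sin_sq_add_cos_sq s
  norm_num [Matrix.cons_val_zero, Matrix.cons_val_one]
  linear_combination h


lemma rect_eq_preimage (s : ℝ) (c : ℝ × ℝ) (a b : ℝ) :
    rect s c a b = (fun x => rot (-s) (x - c)) ⁻¹' (Set.Ioo 0 a ×ˢ Set.Ioo 0 b) := by
  ext x
  constructor
  · rintro ⟨p, hp, rfl⟩
    simpa [rot_neg_rot] using hp
  · intro hx
    exact ⟨rot (-s) (x - c), hx, by simp [rot_rot_neg]⟩

lemma continuous_unrot (s : ℝ) (c : ℝ × ℝ) : Continuous (fun x : ℝ × ℝ => rot (-s) (x - c)) :=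
  continuous_rot.comp ((continuous_const).prodMk (continuous_id.sub continuous_const))

lemma measurableSet_rect (s : ℝ) (c : ℝ × ℝ) (a b : ℝ) : MeasurableSet (rect s c a b) := by
  rw [rect_eq_preimage]
  exact (continuous_unrot s c).measurable (measurableSet_Ioo.prod measurableSet_Ioo)

lemma volume_preimage_unrot (s : ℝ) (c : ℝ × ℝ) (A : Set (ℝ × ℝ)) :
    volume ((fun x => rot (-s) (x - c)) ⁻¹' A) = volume A := by
  have h1 : (fun x : ℝ × ℝ => rot (-s) (x - c)) = (fun y => rotL (-s) y) ∘ (fun x => x + (-c)) := by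
    funext x
    simp only [Function.comp_apply, rotL_apply, sub_eq_add_neg]
  rw [h1, Set.preimage_comp, measure_preimage_add_right,
    Measure.addHaar_preimage_linearMap volume (by rw [rotL_det]; norm_num) A, rotL_det]
  norm_num

lemma volume_rect (s : ℝ) (c : ℝ × ℝ) (a b : ℝ) :
    volume (rect s c a b) = ENNReal.ofReal a * ENNReal.ofReal b := by
  have h1 : rect s c a b = (fun x => x + c) '' ((rotL s) '' (Set.Ioo 0 a ×ˢ Set.Ioo 0 b)) := by
    unfold rect
    rw [Set.image_image]
    apply Set.image_congr'
    intro p; simp [add_comm]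
  rw [h1]
  have h2 : (fun x : ℝ × ℝ => x + c) '' ((rotL s) '' (Set.Ioo 0 a ×ˢ Set.Ioo 0 b))
      = (fun x : ℝ × ℝ => x + (-c)) ⁻¹' ((rotL s) '' (Set.Ioo 0 a ×ˢ Set.Ioo 0 b)) := by
    ext x
    simp only [Set.mem_image, Set.mem_preimage]
    constructor
    · rintro ⟨y, hy, rfl⟩; simpa using hy
    · intro hx; exact ⟨x + -c, hx, by abel⟩
  rw [h2, measure_preimage_add_right, Measure.addHaar_image_linearMap, rotL_det,
    Measure.volume_eq_prod, Measure.prod_prod, Real.volume_Ioo, Real.volume_Ioo]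
  norm_num


lemma continuousAt_setIntegral_rect (f : ℝ × ℝ → ℝ) (hf : Integrable f)
    (s₀ : ℝ) (c₀ : ℝ × ℝ) {a₀ b₀ : ℝ} (ha : 0 < a₀) (hb : 0 < b₀) :
    ContinuousAt (fun q : ℝ × (ℝ × ℝ) × ℝ × ℝ => ∫ p in rect q.1 q.2.1 q.2.2.1 q.2.2.2, f p)
      (s₀, c₀, a₀, b₀) := by
  have key : ∀ (s : ℝ) (c : ℝ × ℝ) (a b : ℝ),
      (∫ p in rect s c a b, f p) = ∫ x, (rect s c a b).indicator f x := by
    intro s c a b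
    exact (integral_indicator (measurableSet_rect s c a b)).symm
  rw [ContinuousAt, tendsto_iff_seq_tendsto]
  intro u hu
  simp only [Function.comp_def, key]
  -- the null set where pointwise convergence may fail
  set box₀ : Set (ℝ × ℝ) := Set.Ioo 0 a₀ ×ˢ Set.Ioo 0 b₀ with hbox₀
  have hN : volume ((fun x => rot (-s₀) (x - c₀)) ⁻¹' (frontier box₀)) = 0 := by
    rw [volume_preimage_unrot]
    rw [hbox₀, frontier_prod_eq, closure_Ioo ha.ne, closure_Ioo hb.ne,
      frontier_Ioo ha, frontier_Ioo hb]
    refine measure_union_null ?_ ?_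
    · rw [Measure.volume_eq_prod, Measure.prod_prod]
      have : volume ({0, b₀} : Set ℝ) = 0 :=
        ((Set.finite_singleton b₀).insert 0).countable.measure_zero _
      rw [this, mul_zero]
    · rw [Measure.volume_eq_prod, Measure.prod_prod]
      have : volume ({0, a₀} : Set ℝ) = 0 :=
        ((Set.finite_singleton a₀).insert 0).countable.measure_zero _
      rw [this, zero_mul]
  refine tendsto_integral_of_dominated_convergence (fun x => ‖f x‖)
    (fun t => hf.aestronglyMeasurable.indicator (measurableSet_rect _ _ _ _))
    hf.norm
    (fun t => Filter.Eventually.of_forall fun x => norm_indicator_le_norm_self f x) ?_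
  -- a.e. pointwise convergence
  have hN' := MeasureTheory.measure_eq_zero_iff_ae_notMem.mp hN
  filter_upwards [hN'] with x hx
  set y₀ : ℝ × ℝ := rot (-s₀) (x - c₀) with hy₀
  have hg : Continuous (fun q : ℝ × (ℝ × ℝ) × ℝ × ℝ => rot (-q.1) (x - q.2.1)) :=
    continuous_rot.comp ((continuous_fst.neg).prodMk
      (continuous_const.sub (continuous_fst.comp continuous_snd)))
  have hy : Tendsto (fun t => rot (-(u t).1) (x - (u t).2.1)) atTop (nhds y₀) :=
    (hg.continuousAt.tendsto).comp hu
  have hy1 : Tendsto (fun t => (rot (-(u t).1) (x - (u t).2.1)).1) atTop (nhds y₀.1) :=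
    (continuous_fst.continuousAt.tendsto).comp hy
  have hy2 : Tendsto (fun t => (rot (-(u t).1) (x - (u t).2.1)).2) atTop (nhds y₀.2) :=
    (continuous_snd.continuousAt.tendsto).comp hy
  have hA : Tendsto (fun t => (u t).2.2.1) atTop (nhds a₀) :=
    ((continuous_fst.comp (continuous_snd.comp continuous_snd)).continuousAt.tendsto).comp hu
  have hB : Tendsto (fun t => (u t).2.2.2) atTop (nhds b₀) :=
    ((continuous_snd.comp (continuous_snd.comp continuous_snd)).continuousAt.tendsto).comp hu
  have hmemiff : ∀ t, x ∈ rect (u t).1 (u t).2.1 (u t).2.2.1 (u t).2.2.2 ↔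
      rot (-(u t).1) (x - (u t).2.1) ∈ Set.Ioo 0 (u t).2.2.1 ×ˢ Set.Ioo 0 (u t).2.2.2 := by
    intro t; rw [rect_eq_preimage]; rfl
  by_cases hmem : y₀ ∈ box₀
  · -- eventually the indicator equals f x
    have hx₀ : x ∈ rect s₀ c₀ a₀ b₀ := by rw [rect_eq_preimage]; exact hmem
    have e1 : ∀ᶠ t in atTop, 0 < (rot (-(u t).1) (x - (u t).2.1)).1 :=
      hy1.eventually (eventually_gt_nhds hmem.1.1)
    have e2 : ∀ᶠ t in atTop, 0 < (u t).2.2.1 - (rot (-(u t).1) (x - (u t).2.1)).1 :=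
      (hA.sub hy1).eventually (eventually_gt_nhds (by simpa using hmem.1.2))
    have e3 : ∀ᶠ t in atTop, 0 < (rot (-(u t).1) (x - (u t).2.1)).2 :=
      hy2.eventually (eventually_gt_nhds hmem.2.1)
    have e4 : ∀ᶠ t in atTop, 0 < (u t).2.2.2 - (rot (-(u t).1) (x - (u t).2.1)).2 :=
      (hB.sub hy2).eventually (eventually_gt_nhds (by simpa using hmem.2.2))
    rw [Set.indicator_of_mem hx₀ f]
    refine Tendsto.congr' ?_ (tendsto_const_nhds : Tendsto (fun _ : ℕ => f x) atTop (nhds (f x)))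
    filter_upwards [e1, e2, e3, e4] with t h1 h2 h3 h4
    have : x ∈ rect (u t).1 (u t).2.1 (u t).2.2.1 (u t).2.2.2 :=
      (hmemiff t).mpr ⟨⟨h1, by linarith⟩, ⟨h3, by linarith⟩⟩
    exact (Set.indicator_of_mem this f).symm
  · -- x is not in the limit rectangle; indicator eventually 0
    have hx₀ : x ∉ rect s₀ c₀ a₀ b₀ := by rw [rect_eq_preimage]; exact hmem
    have hcl : y₀ ∉ closure box₀ := by
      intro hc
      refine hx ?_
      rw [frontier]
      exact ⟨hc, by rwa [IsOpen.interior_eq (isOpen_Ioo.prod isOpen_Ioo)]⟩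
    have hcl' : y₀ ∉ Set.Icc 0 a₀ ×ˢ Set.Icc 0 b₀ := by
      rwa [hbox₀, closure_prod_eq, closure_Ioo ha.ne, closure_Ioo hb.ne] at hcl
    have hcases : y₀.1 < 0 ∨ a₀ < y₀.1 ∨ y₀.2 < 0 ∨ b₀ < y₀.2 := by
      by_contra h
      push_neg at h
      exact hcl' ⟨⟨h.1, h.2.1⟩, ⟨h.2.2.1, h.2.2.2⟩⟩
    have e : ∀ᶠ t in atTop, x ∉ rect (u t).1 (u t).2.1 (u t).2.2.1 (u t).2.2.2 := by
      rcases hcases with h | h | h | h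
      · filter_upwards [hy1.eventually (eventually_lt_nhds h)] with t ht hmem'
        exact absurd ((hmemiff t).mp hmem').1.1 (by linarith)
      · have := (hy1.sub hA).eventually (eventually_gt_nhds (by linarith : (0:ℝ) < y₀.1 - a₀))
        filter_upwards [this] with t ht hmem'
        exact absurd ((hmemiff t).mp hmem').1.2 (by simp only [sub_pos] at ht; linarith)
      · filter_upwards [hy2.eventually (eventually_lt_nhds h)] with t ht hmem'
        exact absurd ((hmemiff t).mp hmem').2.1 (by linarith)
      · have := (hy2.sub hB).eventually (eventually_gt_nhds (by linarith : (0:ℝ) < y₀.2 - b₀))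
        filter_upwards [this] with t ht hmem'
        exact absurd ((hmemiff t).mp hmem').2.2 (by simp only [sub_pos] at ht; linarith)
    rw [Set.indicator_of_notMem hx₀ f]
    refine Tendsto.congr' ?_ (tendsto_const_nhds : Tendsto (fun _ : ℕ => (0:ℝ)) atTop (nhds 0))
    filter_upwards [e] with t ht
    exact (Set.indicator_of_notMem ht f).symm

-- chunk 4a: eventual membership in rectFilter
lemma eventually_rectFilter (s : ℝ) (x : ℝ × ℝ) (p : Set (ℝ × ℝ) → Prop) :
    (∀ᶠ R in rectFilter s x, p R) ↔
      ∃ d > 0, ∀ R, IsRect s R → x ∈ R → Metric.diam R < d → p R := by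
  have hdir : DirectedOn
      ((fun d : ℝ => Filter.principal {R | IsRect s R ∧ x ∈ R ∧ Metric.diam R < d}) ⁻¹'o
        fun x1 x2 => x1 ≥ x2) (Set.Ioi 0) := by
    intro d₁ h₁ d₂ h₂
    refine ⟨min d₁ d₂, Set.mem_Ioi.mpr (lt_min (Set.mem_Ioi.mp h₁) (Set.mem_Ioi.mp h₂)), ?_, ?_⟩ <;>
      · simp only [Order.Preimage, ge_iff_le, Filter.principal_mono]
        intro R hR
        exact ⟨hR.1, hR.2.1, hR.2.2.trans_le (by simp)⟩
  rw [Filter.eventually_iff, rectFilter, Filter.mem_biInf_of_directed hdir ⟨1, by norm_num⟩]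
  constructor
  · rintro ⟨d, hd, hsub⟩
    exact ⟨d, hd, fun R h1 h2 h3 => hsub ⟨h1, h2, h3⟩⟩
  · rintro ⟨d, hd, h⟩
    exact ⟨d, hd, fun R hR => h R hR.1 hR.2.1 hR.2.2⟩

-- chunk 4b: limsup characterization
lemma upperDeriv_eq_top_iff (s : ℝ) (f : ℝ × ℝ → ℝ) (x : ℝ × ℝ) :
    upperDeriv s f x = ⊤ ↔
      ∀ lam : ℝ, ∀ d > 0, ∃ R, IsRect s R ∧ x ∈ R ∧ Metric.diam R < d ∧ lam < avg f R := by
  constructor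
  · intro h lam d hd
    by_contra hno
    push_neg at hno
    have hev : ∀ᶠ R in rectFilter s x, (avg f R : EReal) ≤ (lam : EReal) := by
      rw [eventually_rectFilter]
      exact ⟨d, hd, fun R h1 h2 h3 => EReal.coe_le_coe_iff.mpr (hno R h1 h2 h3)⟩
    have : upperDeriv s f x ≤ (lam : EReal) := by
      rw [upperDeriv, Filter.limsup_eq]
      exact sInf_le hev
    rw [h] at this
    exact absurd this (not_le.mpr (EReal.coe_lt_top lam))
  · intro h
    by_contra hne
    obtain ⟨lam, hl1, -⟩ := EReal.lt_iff_exists_real_btwn.mp (Ne.lt_top hne)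
    rw [upperDeriv, Filter.limsup_eq] at hl1
    obtain ⟨a, ha, halt⟩ := sInf_lt_iff.mp hl1
    have hev : ∀ᶠ R in rectFilter s x, (avg f R : EReal) ≤ (lam : EReal) :=
      ha.mono fun R hR => hR.trans halt.le
    rw [eventually_rectFilter] at hev
    obtain ⟨d, hd, hall⟩ := hev
    obtain ⟨R, h1, h2, h3, h4⟩ := h lam d hd
    exact absurd (EReal.coe_le_coe_iff.mp (hall R h1 h2 h3)) (not_le.mpr h4)

-- chunk 4c: diameter bounds
lemma rot_sub (s : ℝ) (p q : ℝ × ℝ) : rot s p - rot s q = rot s (p - q) := by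
  simp only [rot, Prod.mk_sub_mk, Prod.fst_sub, Prod.snd_sub]
  rw [Prod.ext_iff]
  constructor <;> simp only [] <;> ring

lemma dist_rect_le (s : ℝ) (c : ℝ × ℝ) (a b : ℝ) :
    ∀ x ∈ rect s c a b, ∀ y ∈ rect s c a b, dist x y ≤ a + b := by
  rintro x ⟨p, hp, rfl⟩ y ⟨q, hq, rfl⟩
  rw [dist_eq_norm]
  have : c + rot s p - (c + rot s q) = rot s (p - q) := by rw [← rot_sub]; abel
  rw [this, Prod.norm_def]
  have h1 : |p.1 - q.1| ≤ a := by
    rcases hp.1 with ⟨hp1, hp2⟩; rcases hq.1 with ⟨hq1, hq2⟩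
    rw [abs_le]; constructor <;> linarith
  have h2 : |p.2 - q.2| ≤ b := by
    rcases hp.2 with ⟨hp1, hp2⟩; rcases hq.2 with ⟨hq1, hq2⟩
    rw [abs_le]; constructor <;> linarith
  have hc := abs_cos_le_one s
  have hs := abs_sin_le_one s
  have hd1 : (p - q).1 = p.1 - q.1 := rfl
  have hd2 : (p - q).2 = p.2 - q.2 := rfl
  have e1 : ‖(rot s (p - q)).1‖ ≤ a + b := by
    simp only [rot, Real.norm_eq_abs, hd1, hd2]
    calc |(p.1 - q.1) * Real.cos s - (p.2 - q.2) * Real.sin s|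
        ≤ |(p.1 - q.1) * Real.cos s| + |(p.2 - q.2) * Real.sin s| := abs_sub _ _
      _ ≤ a + b := by
          rw [abs_mul, abs_mul]
          exact add_le_add ((mul_le_of_le_one_right (abs_nonneg _) hc).trans h1)
            ((mul_le_of_le_one_right (abs_nonneg _) hs).trans h2)
  have e2 : ‖(rot s (p - q)).2‖ ≤ a + b := by
    simp only [rot, Real.norm_eq_abs, hd1, hd2]
    calc |(p.1 - q.1) * Real.sin s + (p.2 - q.2) * Real.cos s|
        ≤ |(p.1 - q.1) * Real.sin s| + |(p.2 - q.2) * Real.cos s| := abs_add_le _ _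
      _ ≤ a + b := by
          rw [abs_mul, abs_mul]
          exact add_le_add ((mul_le_of_le_one_right (abs_nonneg _) hs).trans h1)
            ((mul_le_of_le_one_right (abs_nonneg _) hc).trans h2)
  exact max_le e1 e2

lemma isBounded_rect (s : ℝ) (c : ℝ × ℝ) (a b : ℝ) :
    Bornology.IsBounded (rect s c a b) := by
  rw [Metric.isBounded_iff]
  exact ⟨a + b, fun x hx y hy => dist_rect_le s c a b x hx y hy⟩

lemma diam_rect_le (s : ℝ) (c : ℝ × ℝ) {a b : ℝ} (ha : 0 < a) (hb : 0 < b) :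
    Metric.diam (rect s c a b) ≤ a + b :=
  Metric.diam_le_of_forall_dist_le (by linarith) (dist_rect_le s c a b)

lemma half_le_max_cos_sin (s : ℝ) : 1/2 ≤ max |Real.cos s| |Real.sin s| := by
  by_contra h
  push_neg at h
  have h1 : |Real.cos s| < 1/2 := lt_of_le_of_lt (le_max_left _ _) h
  have h2 : |Real.sin s| < 1/2 := lt_of_le_of_lt (le_max_right _ _) h
  have := sin_sq_add_cos_sq s
  nlinarith [sq_abs (Real.cos s), sq_abs (Real.sin s), abs_nonneg (Real.cos s), abs_nonneg (Real.sin s)]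

lemma side_le_two_diam (s : ℝ) (c : ℝ × ℝ) {a b : ℝ} (ha : 0 < a) (hb : 0 < b) :
    a ≤ 2 * Metric.diam (rect s c a b) ∧ b ≤ 2 * Metric.diam (rect s c a b) := by
  have hbd := isBounded_rect s c a b
  have hmax := half_le_max_cos_sin s
  have hdnn : 0 ≤ Metric.diam (rect s c a b) := Metric.diam_nonneg
  have key1 : ∀ t t' : ℝ, t ∈ Set.Ioo 0 a → t' ∈ Set.Ioo 0 a →
      |t - t'| ≤ 2 * Metric.diam (rect s c a b) := by
    intro t t' ht ht'
    have hP : c + rot s (t, b/2) ∈ rect s c a b :=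
      ⟨(t, b/2), ⟨ht, ⟨by linarith, by linarith⟩⟩, rfl⟩
    have hQ : c + rot s (t', b/2) ∈ rect s c a b :=
      ⟨(t', b/2), ⟨ht', ⟨by linarith, by linarith⟩⟩, rfl⟩
    have hdist := Metric.dist_le_diam_of_mem hbd hP hQ
    have hcalc : dist (c + rot s (t, b/2)) (c + rot s (t', b/2)) = |t - t'| * max |Real.cos s| |Real.sin s| := by
      rw [dist_eq_norm]
      have : c + rot s (t, b/2) - (c + rot s (t', b/2)) = rot s ((t, b/2) - (t', b/2)) := by
        rw [← rot_sub]; abel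
      rw [this]
      have : (t, b/2) - (t', b/2) = ((t - t' : ℝ), (0:ℝ)) := by
        rw [Prod.mk_sub_mk]; norm_num
      rw [this, Prod.norm_def]
      simp only [rot, mul_zero, zero_mul, sub_zero, add_zero, Real.norm_eq_abs, abs_mul]
      rw [mul_max_of_nonneg _ _ (abs_nonneg (t - t'))]
    rw [hcalc] at hdist
    nlinarith [abs_nonneg (t - t')]
  have key2 : ∀ t t' : ℝ, t ∈ Set.Ioo 0 b → t' ∈ Set.Ioo 0 b →
      |t - t'| ≤ 2 * Metric.diam (rect s c a b) := by
    intro t t' ht ht'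
    have hP : c + rot s (a/2, t) ∈ rect s c a b :=
      ⟨(a/2, t), ⟨⟨by linarith, by linarith⟩, ht⟩, rfl⟩
    have hQ : c + rot s (a/2, t') ∈ rect s c a b :=
      ⟨(a/2, t'), ⟨⟨by linarith, by linarith⟩, ht'⟩, rfl⟩
    have hdist := Metric.dist_le_diam_of_mem hbd hP hQ
    have hcalc : dist (c + rot s (a/2, t)) (c + rot s (a/2, t')) = |t - t'| * max |Real.sin s| |Real.cos s| := by
      rw [dist_eq_norm]
      have : c + rot s (a/2, t) - (c + rot s (a/2, t')) = rot s ((a/2, t) - (a/2, t')) := by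
        rw [← rot_sub]; abel
      rw [this]
      have : (a/2, t) - (a/2, t') = ((0:ℝ), (t - t' : ℝ)) := by
        rw [Prod.mk_sub_mk]; norm_num
      rw [this, Prod.norm_def]
      simp only [rot, mul_zero, zero_mul, sub_zero, add_zero, zero_sub, zero_add, Real.norm_eq_abs, abs_mul, abs_neg]
      rw [mul_max_of_nonneg _ _ (abs_nonneg (t - t'))]
    rw [hcalc] at hdist
    rw [max_comm] at hmax
    nlinarith [abs_nonneg (t - t')]
  constructor
  · refine le_of_forall_pos_le_add fun ε hε => ?_
    by_cases hcase : a ≤ ε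
    · linarith
    · push_neg at hcase
      have := key1 (ε/2) (a - ε/2) ⟨by linarith, by linarith⟩ ⟨by linarith, by linarith⟩
      rw [abs_of_nonpos (by linarith)] at this
      linarith
  · refine le_of_forall_pos_le_add fun ε hε => ?_
    by_cases hcase : b ≤ ε
    · linarith
    · push_neg at hcase
      have := key2 (ε/2) (b - ε/2) ⟨by linarith, by linarith⟩ ⟨by linarith, by linarith⟩
      rw [abs_of_nonpos (by linarith)] at this
      linarith

-- chunk 5
lemma volume_rect_toReal (s : ℝ) (c : ℝ × ℝ) (a b : ℝ) :
    (volume (rect s c a b)).toReal = max a 0 * max b 0 := by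
  rw [volume_rect, ENNReal.toReal_mul, ENNReal.toReal_ofReal', ENNReal.toReal_ofReal']

lemma continuousAt_avg_rect (f : ℝ × ℝ → ℝ) (hf : Integrable f)
    (s₀ : ℝ) (c₀ : ℝ × ℝ) {a₀ b₀ : ℝ} (ha : 0 < a₀) (hb : 0 < b₀) :
    ContinuousAt (fun q : ℝ × (ℝ × ℝ) × ℝ × ℝ => avg f (rect q.1 q.2.1 q.2.2.1 q.2.2.2))
      (s₀, c₀, a₀, b₀) := by
  have h1 := continuousAt_setIntegral_rect f hf s₀ c₀ ha hb
  have h2 : ContinuousAt (fun q : ℝ × (ℝ × ℝ) × ℝ × ℝ =>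
      (volume (rect q.1 q.2.1 q.2.2.1 q.2.2.2)).toReal) (s₀, c₀, a₀, b₀) := by
    have : (fun q : ℝ × (ℝ × ℝ) × ℝ × ℝ => (volume (rect q.1 q.2.1 q.2.2.1 q.2.2.2)).toReal)
        = fun q => max q.2.2.1 0 * max q.2.2.2 0 := by
      funext q; exact volume_rect_toReal _ _ _ _
    rw [this]
    fun_prop
  have hne : (volume (rect s₀ c₀ a₀ b₀)).toReal ≠ 0 := by
    rw [volume_rect_toReal, max_eq_left ha.le, max_eq_left hb.le]
    positivity
  exact h1.div h2 hne

/-- The good rational-parameter rectangle predicate. -/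
def goodR (f : ℝ × ℝ → ℝ) (s : ℝ) (lam : ℚ) (n : ℕ) (x : ℝ × ℝ) : Prop :=
  ∃ c₁ c₂ a b : ℚ, 0 < (a : ℝ) ∧ 0 < (b : ℝ) ∧ (a : ℝ) + (b : ℝ) < 1 / (n + 1) ∧
    x ∈ rect s ((c₁ : ℝ), (c₂ : ℝ)) a b ∧ (lam : ℝ) < avg f (rect s ((c₁ : ℝ), (c₂ : ℝ)) a b)

set_option maxHeartbeats 2000000 in
lemma goodR_iff (f : ℝ × ℝ → ℝ) (hf : Integrable f) (s : ℝ) (x : ℝ × ℝ) :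
    (∀ lam : ℝ, ∀ d > 0, ∃ R, IsRect s R ∧ x ∈ R ∧ Metric.diam R < d ∧ lam < avg f R) ↔
      ∀ (lam : ℚ) (n : ℕ), goodR f s lam n x := by
  constructor
  · intro h lam n
    obtain ⟨R, hR, hxR, hdiam, hav⟩ := h lam (1 / (4 * (n + 1)))
      (by positivity)
    obtain ⟨c, a, b, ha, hb, -, -, rfl⟩ := hR
    have hside := side_le_two_diam s c ha hb
    have hab : a + b < 1 / (n + 1) := by
      have h4 : (0:ℝ) < (n:ℝ) + 1 := by positivity
      have := hside.1; have := hside.2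
      have : a + b ≤ 4 * Metric.diam (rect s c a b) := by linarith
      calc a + b ≤ 4 * Metric.diam (rect s c a b) := this
        _ < 4 * (1 / (4 * (n + 1))) := by linarith
        _ = 1 / (n + 1) := by field_simp
    -- the unrotated coordinates of x
    have hxmem : rot (-s) (x - c) ∈ Set.Ioo 0 a ×ˢ Set.Ioo 0 b := by
      rw [rect_eq_preimage] at hxR; exact hxR
    set p := rot (-s) (x - c) with hp
    -- Step 1: shrink a b to rationals
    have hψ : ContinuousAt ((fun q : ℝ × (ℝ × ℝ) × ℝ × ℝ => avg f (rect q.1 q.2.1 q.2.2.1 q.2.2.2))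
        ∘ (fun ab : ℝ × ℝ => (s, c, ab.1, ab.2))) (a, b) :=
      ContinuousAt.comp (continuousAt_avg_rect f hf s c ha hb)
        (by fun_prop : ContinuousAt (fun ab : ℝ × ℝ => (s, c, ab.1, ab.2)) (a, b))
    have hev : ∀ᶠ ab : ℝ × ℝ in nhds (a, b), (lam : ℝ) < avg f (rect s c ab.1 ab.2) :=
      hψ.eventually (eventually_gt_nhds hav)
    rw [Metric.eventually_nhds_iff] at hev
    obtain ⟨ε, hε, hball⟩ := hev
    obtain ⟨a', ha'1, ha'2⟩ := exists_rat_btwn (show max p.1 (a - ε/2) < a from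
      max_lt hxmem.1.2 (by linarith))
    obtain ⟨b', hb'1, hb'2⟩ := exists_rat_btwn (show max p.2 (b - ε/2) < b from
      max_lt hxmem.2.2 (by linarith))
    have hpa : p.1 < a' := lt_of_le_of_lt (le_max_left _ _) ha'1
    have haε : a - ε/2 < a' := lt_of_le_of_lt (le_max_right _ _) ha'1
    have hpb : p.2 < b' := lt_of_le_of_lt (le_max_left _ _) hb'1
    have hbε : b - ε/2 < b' := lt_of_le_of_lt (le_max_right _ _) hb'1
    have ha' : (0:ℝ) < a' := hxmem.1.1.trans hpa
    have hb' : (0:ℝ) < b' := hxmem.2.1.trans hpb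
    have hdistab : dist (((a' : ℝ), (b' : ℝ)) : ℝ × ℝ) (a, b) < ε := by
      rw [Prod.dist_eq]
      refine max_lt ?_ ?_ <;> rw [Real.dist_eq, abs_of_nonpos (by linarith)] <;> linarith
    have hav' : (lam : ℝ) < avg f (rect s c a' b') := by
      have h0 := hball hdistab; beta_reduce at h0; exact h0
    -- Step 2: rationalize the corner
    have hχ : ContinuousAt ((fun q : ℝ × (ℝ × ℝ) × ℝ × ℝ => avg f (rect q.1 q.2.1 q.2.2.1 q.2.2.2))
        ∘ (fun c' : ℝ × ℝ => (s, c', (a' : ℝ), (b' : ℝ)))) c :=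
      ContinuousAt.comp (continuousAt_avg_rect f hf s c ha' hb')
        (by fun_prop : ContinuousAt (fun c' : ℝ × ℝ => (s, c', (a' : ℝ), (b' : ℝ))) c)
    have hev2 : ∀ᶠ c' : ℝ × ℝ in nhds c, (lam : ℝ) < avg f (rect s c' a' b') :=
      hχ.eventually (eventually_gt_nhds hav')
    have hmem2 : ∀ᶠ c' : ℝ × ℝ in nhds c, rot (-s) (x - c') ∈ Set.Ioo (0:ℝ) a' ×ˢ Set.Ioo (0:ℝ) b' := by
      have hcont : ContinuousAt (fun c' : ℝ × ℝ => rot (-s) (x - c')) c :=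
        (continuous_rot.comp ((continuous_const (y := -s)).prodMk
          (continuous_const.sub continuous_id))).continuousAt
      refine hcont.eventually_mem ((isOpen_Ioo.prod isOpen_Ioo).mem_nhds ?_)
      exact ⟨⟨hxmem.1.1, hpa⟩, ⟨hxmem.2.1, hpb⟩⟩
    rw [Metric.eventually_nhds_iff] at hev2 hmem2
    obtain ⟨ε₂, hε₂, hball2⟩ := hev2
    obtain ⟨ε₃, hε₃, hball3⟩ := hmem2
    set ε₄ := min ε₂ ε₃ with hε₄
    have hε₄pos : 0 < ε₄ := lt_min hε₂ hε₃
    obtain ⟨c₁', hc₁'1, hc₁'2⟩ := exists_rat_btwn (show c.1 - ε₄/2 < c.1 by linarith)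
    obtain ⟨c₂', hc₂'1, hc₂'2⟩ := exists_rat_btwn (show c.2 - ε₄/2 < c.2 by linarith)
    have hdist : dist (((c₁' : ℝ), (c₂' : ℝ)) : ℝ × ℝ) c < ε₄ := by
      rw [Prod.dist_eq]
      refine max_lt ?_ ?_ <;> rw [Real.dist_eq, abs_of_nonpos (by linarith)] <;> linarith
    refine ⟨c₁', c₂', a', b', ha', hb', ?_, ?_, ?_⟩
    · calc (a' : ℝ) + b' ≤ a + b := by linarith
        _ < 1 / (n + 1) := hab
    · rw [rect_eq_preimage]
      have h3 : dist (((c₁' : ℝ), (c₂' : ℝ)) : ℝ × ℝ) c < ε₃ := lt_of_lt_of_le hdist (min_le_right _ _)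
      have h0 := hball3 h3; beta_reduce at h0; exact h0
    · have h2 : dist (((c₁' : ℝ), (c₂' : ℝ)) : ℝ × ℝ) c < ε₂ := lt_of_lt_of_le hdist (min_le_left _ _)
      have h0 := hball2 h2; beta_reduce at h0; exact h0
  · intro h lam d hd
    obtain ⟨lam', hlam'⟩ := exists_rat_gt lam
    obtain ⟨n, hn⟩ := exists_nat_one_div_lt hd
    obtain ⟨c₁, c₂, a, b, ha, hb, hab, hmem, hav⟩ := h lam' n
    refine ⟨rect s ((c₁:ℝ), (c₂:ℝ)) a b, ⟨_, a, b, ha, hb, trivial, trivial, rfl⟩, hmem, ?_, ?_⟩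
    · calc Metric.diam (rect s ((c₁:ℝ), (c₂:ℝ)) a b) ≤ a + b := diam_rect_le _ _ ha hb
        _ < 1 / (n + 1) := hab
        _ < d := hn
    · linarith

-- chunk 6
def Uset (f : ℝ × ℝ → ℝ) (s : ℝ) (lam : ℚ) (n : ℕ) : Set (ℝ × ℝ) := {x | goodR f s lam n x}

lemma measurableSet_Uset (f : ℝ × ℝ → ℝ) (s : ℝ) (lam : ℚ) (n : ℕ) :
    MeasurableSet (Uset f s lam n) := by
  have : Uset f s lam n = ⋃ (c₁ : ℚ), ⋃ (c₂ : ℚ), ⋃ (a : ℚ), ⋃ (b : ℚ),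
      ⋃ (_ : 0 < (a : ℝ) ∧ 0 < (b : ℝ) ∧ (a : ℝ) + (b : ℝ) < 1 / (n + 1) ∧
        (lam : ℝ) < avg f (rect s ((c₁ : ℝ), (c₂ : ℝ)) a b)),
        rect s ((c₁ : ℝ), (c₂ : ℝ)) a b := by
    ext x
    simp only [Uset, goodR, Set.mem_setOf_eq, Set.mem_iUnion]
    constructor
    · rintro ⟨c₁, c₂, a, b, h1, h2, h3, h4, h5⟩
      exact ⟨c₁, c₂, a, b, ⟨h1, h2, h3, h5⟩, h4⟩
    · rintro ⟨c₁, c₂, a, b, ⟨h1, h2, h3, h5⟩, h4⟩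
      exact ⟨c₁, c₂, a, b, h1, h2, h3, h4, h5⟩
  rw [this]
  exact MeasurableSet.iUnion fun c₁ => MeasurableSet.iUnion fun c₂ =>
    MeasurableSet.iUnion fun a => MeasurableSet.iUnion fun b =>
    MeasurableSet.iUnion fun _ => measurableSet_rect _ _ _ _

lemma goodR_eventually (f : ℝ × ℝ → ℝ) (hf : Integrable f) {s : ℝ} {lam : ℚ} {n : ℕ}
    {x : ℝ × ℝ} (h : goodR f s lam n x) : ∀ᶠ s' in nhds s, goodR f s' lam n x := by
  obtain ⟨c₁, c₂, a, b, ha, hb, hab, hmem, hav⟩ := h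
  have hmem' : rot (-s) (x - ((c₁ : ℝ), (c₂ : ℝ))) ∈ Set.Ioo (0:ℝ) a ×ˢ Set.Ioo (0:ℝ) b := by
    rw [rect_eq_preimage] at hmem; exact hmem
  have hcont : ContinuousAt (fun s' : ℝ => rot (-s') (x - ((c₁ : ℝ), (c₂ : ℝ)))) s :=
    (continuous_rot.comp ((continuous_neg).prodMk continuous_const)).continuousAt
  have e1 : ∀ᶠ s' in nhds s,
      rot (-s') (x - ((c₁ : ℝ), (c₂ : ℝ))) ∈ Set.Ioo (0:ℝ) a ×ˢ Set.Ioo (0:ℝ) b :=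
    hcont.eventually_mem ((isOpen_Ioo.prod isOpen_Ioo).mem_nhds hmem')
  have hχ : ContinuousAt ((fun q : ℝ × (ℝ × ℝ) × ℝ × ℝ => avg f (rect q.1 q.2.1 q.2.2.1 q.2.2.2))
      ∘ (fun s' : ℝ => (s', (((c₁ : ℝ), (c₂ : ℝ)) : ℝ × ℝ), (a : ℝ), (b : ℝ)))) s :=
    ContinuousAt.comp (continuousAt_avg_rect f hf s _ ha hb)
      (by fun_prop : ContinuousAt (fun s' : ℝ => (s', (((c₁ : ℝ), (c₂ : ℝ)) : ℝ × ℝ), (a : ℝ), (b : ℝ))) s)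
  have e2 := hχ.eventually (eventually_gt_nhds hav)
  filter_upwards [e1, e2] with s' h1 h2
  refine ⟨c₁, c₂, a, b, ha, hb, hab, ?_, ?_⟩
  · rw [rect_eq_preimage]; exact h1
  · beta_reduce at h2; exact h2

lemma isOpen_measure_gt (f : ℝ × ℝ → ℝ) (hf : Integrable f) (lam : ℚ) (n : ℕ)
    (B : Set (ℝ × ℝ)) (hB : MeasurableSet B) (C : ℝ≥0∞) :
    IsOpen {s : ℝ | C < volume (Uset f s lam n ∩ B)} := by
  have hclosed : IsClosed {s : ℝ | volume (Uset f s lam n ∩ B) ≤ C} := by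
    refine IsSeqClosed.isClosed ?_
    intro u s hmem hlim
    have key : volume (Uset f s lam n ∩ B) ≤
        liminf (fun t => volume (Uset f (u t) lam n ∩ B)) atTop := by
      have h1 : ∀ t, volume (Uset f (u t) lam n ∩ B)
          = ∫⁻ x, (Uset f (u t) lam n ∩ B).indicator 1 x := fun t =>
        (lintegral_indicator_one ((measurableSet_Uset f (u t) lam n).inter hB)).symm
      have h2 : volume (Uset f s lam n ∩ B)
          = ∫⁻ x, (Uset f s lam n ∩ B).indicator 1 x :=
        (lintegral_indicator_one ((measurableSet_Uset f s lam n).inter hB)).symm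
      rw [h2]
      have h3 : ∀ x, (Uset f s lam n ∩ B).indicator (1 : (ℝ×ℝ) → ℝ≥0∞) x ≤
          liminf (fun t => (Uset f (u t) lam n ∩ B).indicator (1 : (ℝ×ℝ) → ℝ≥0∞) x) atTop := by
        intro x
        by_cases hx : x ∈ Uset f s lam n ∩ B
        · rw [Set.indicator_of_mem hx]
          have hev : ∀ᶠ t in atTop, x ∈ Uset f (u t) lam n ∩ B := by
            have := hlim.eventually (goodR_eventually f hf hx.1)
            filter_upwards [this] with t ht
            exact ⟨ht, hx.2⟩
          refine le_liminf_of_le (h := ?_)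
          filter_upwards [hev] with t ht
          rw [Set.indicator_of_mem ht]
        · rw [Set.indicator_of_notMem hx]
          exact zero_le
      calc ∫⁻ x, (Uset f s lam n ∩ B).indicator 1 x
          ≤ ∫⁻ x, liminf (fun t => (Uset f (u t) lam n ∩ B).indicator 1 x) atTop :=
            lintegral_mono h3
        _ ≤ liminf (fun t => ∫⁻ x, (Uset f (u t) lam n ∩ B).indicator 1 x) atTop :=
            lintegral_liminf_le fun t =>
              (measurable_one.indicator ((measurableSet_Uset f (u t) lam n).inter hB))
        _ = liminf (fun t => volume (Uset f (u t) lam n ∩ B)) atTop := by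
            simp only [← h1]
    refine key.trans ?_
    exact liminf_le_of_frequently_le (Filter.Frequently.of_forall fun t => hmem t)
  have : {s : ℝ | C < volume (Uset f s lam n ∩ B)}
      = {s : ℝ | volume (Uset f s lam n ∩ B) ≤ C}ᶜ := by
    ext s; simp [not_le]
  rw [this]
  exact hclosed.isOpen_compl

-- chunk 7
lemma ae_top_iff_volume (f : ℝ × ℝ → ℝ) (hf : Integrable f) (s : ℝ) :
    (∀ᵐ x : ℝ × ℝ, upperDeriv s f x = ⊤) ↔
      ∀ (lam : ℚ) (n m j : ℕ),
        volume (Metric.ball (0 : ℝ × ℝ) (m + 1)) - ((j : ℝ≥0∞) + 1)⁻¹ <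
          volume (Uset f s lam n ∩ Metric.ball (0 : ℝ × ℝ) (m + 1)) := by
  have step1 : (∀ᵐ x : ℝ × ℝ, upperDeriv s f x = ⊤) ↔
      ∀ (lam : ℚ) (n : ℕ), ∀ᵐ x : ℝ × ℝ, goodR f s lam n x := by
    rw [Filter.eventually_congr (Filter.Eventually.of_forall fun x =>
      (upperDeriv_eq_top_iff s f x).trans (goodR_iff f hf s x))]
    rw [MeasureTheory.ae_all_iff]
    exact forall_congr' fun lam => MeasureTheory.ae_all_iff
  rw [step1]
  refine forall_congr' fun lam => forall_congr' fun n => ?_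
  -- step 2 : a.e. good ↔ complement null on balls
  have step2 : (∀ᵐ x : ℝ × ℝ, goodR f s lam n x) ↔
      ∀ m : ℕ, volume ((Uset f s lam n)ᶜ ∩ Metric.ball (0 : ℝ × ℝ) (m + 1)) = 0 := by
    rw [MeasureTheory.ae_iff]
    have hc : {x : ℝ × ℝ | ¬ goodR f s lam n x} = (Uset f s lam n)ᶜ := rfl
    rw [hc]
    constructor
    · intro h m
      exact measure_mono_null (Set.inter_subset_left) h
    · intro h
      have hcover : (Uset f s lam n)ᶜ
          = ⋃ m : ℕ, (Uset f s lam n)ᶜ ∩ Metric.ball (0 : ℝ × ℝ) (m + 1) := by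
        ext x
        simp only [Set.mem_iUnion, Set.mem_inter_iff]
        constructor
        · intro hx
          obtain ⟨m, hm⟩ := exists_nat_gt (dist x (0 : ℝ × ℝ))
          exact ⟨m, hx, by rw [Metric.mem_ball]; push_cast; linarith⟩
        · rintro ⟨m, hm, -⟩; exact hm
      rw [hcover]
      exact measure_iUnion_null_iff.mpr h
  rw [step2]
  refine forall_congr' fun m => ?_
  set B := Metric.ball (0 : ℝ × ℝ) ((m : ℝ) + 1) with hB
  have hBpos : 0 < volume B := Metric.measure_ball_pos volume _ (by positivity)
  have hBfin : volume B ≠ ⊤ := (measure_ball_lt_top).ne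
  have hsplit : volume (B ∩ Uset f s lam n) + volume (B \ Uset f s lam n) = volume B :=
    measure_inter_add_diff B (measurableSet_Uset f s lam n)
  have hdiff : B \ Uset f s lam n = (Uset f s lam n)ᶜ ∩ B := by
    rw [Set.diff_eq, Set.inter_comm]
  have hIC : Uset f s lam n ∩ B = B ∩ Uset f s lam n := Set.inter_comm _ _
  -- null complement ↔ vol B ≤ vol (U ∩ B)
  have iff1 : volume ((Uset f s lam n)ᶜ ∩ B) = 0 ↔
      volume B ≤ volume (Uset f s lam n ∩ B) := by
    rw [← hdiff, hIC]
    constructor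
    · intro h
      rw [← hsplit, h, add_zero]
    · intro h
      have hfin : volume (B ∩ Uset f s lam n) ≠ ⊤ :=
        (lt_of_le_of_lt (measure_mono Set.inter_subset_left) (measure_ball_lt_top)).ne
      have : volume (B ∩ Uset f s lam n) + volume (B \ Uset f s lam n)
          ≤ volume (B ∩ Uset f s lam n) + 0 := by
        rw [add_zero, hsplit]; exact h
      exact le_antisymm ((ENNReal.add_le_add_iff_left hfin).mp this) zero_le
  rw [iff1]
  -- the epsilon characterization
  constructor
  · intro h j
    refine lt_of_lt_of_le ?_ h
    exact ENNReal.sub_lt_self hBfin hBpos.ne' (by simp)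
  · intro h
    refine ENNReal.le_of_forall_pos_le_add fun ε hε hfin => ?_
    obtain ⟨jn, hjn⟩ := ENNReal.exists_inv_nat_lt (show (ε : ℝ≥0∞) ≠ 0 by
      simpa using hε.ne')
    have hj : ((jn : ℝ≥0∞) + 1)⁻¹ ≤ (ε : ℝ≥0∞) := by
      refine le_trans ?_ hjn.le
      refine ENNReal.inv_le_inv.mpr ?_
      exact le_add_right (le_refl _)
    have := h jn
    have h2 : volume B ≤ volume (Uset f s lam n ∩ B) + ((jn : ℝ≥0∞) + 1)⁻¹ :=
      tsub_le_iff_right.mp this.le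
    exact h2.trans (add_le_add le_rfl hj)

/-- for every `f ∈ L¹(ℝ²)`, the set of slopes `s ∈ [0, π/2)` for which
`D̄_s f (x) = ∞` almost everywhere is a `G_δ` set in `[0, π/2)`. -/
theorem gdelta_of_ae_infinite_upperDeriv (f : ℝ × ℝ → ℝ) (hf : Integrable f) :
    IsGdeltaIn {s : ℝ | s ∈ Set.Ico 0 (π / 2) ∧ ∀ᵐ x : ℝ × ℝ, upperDeriv s f x = ⊤} := by
  classical
  refine ⟨fun k =>
    (fun p : ℚ × ℕ × ℕ × ℕ =>
      {s : ℝ | volume (Metric.ball (0 : ℝ × ℝ) ((p.2.2.1 : ℝ) + 1)) - ((p.2.2.2 : ℝ≥0∞) + 1)⁻¹ <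
        volume (Uset f s p.1 p.2.1 ∩ Metric.ball (0 : ℝ × ℝ) ((p.2.2.1 : ℝ) + 1))})
      ((Denumerable.eqv (ℚ × ℕ × ℕ × ℕ)).symm k),
    fun k => isOpen_measure_gt f hf _ _ _ Metric.isOpen_ball.measurableSet _, ?_⟩
  ext s
  simp only [Set.mem_setOf_eq, Set.mem_inter_iff, Set.mem_iInter]
  constructor
  · rintro ⟨hs, hae⟩
    refine ⟨fun k => ?_, hs⟩
    exact (ae_top_iff_volume f hf s).mp hae _ _ _ _
  · rintro ⟨hG, hs⟩
    refine ⟨hs, (ae_top_iff_volume f hf s).mpr ?_⟩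
    intro lam n m j
    have := hG ((Denumerable.eqv (ℚ × ℕ × ℕ × ℕ)) (lam, n, m, j))
    rwa [Equiv.symm_apply_apply] at this

end
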